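/- The Kuratowski-style pairing on monadic nested types is correct: for the NRC expressions Pair(x₁,x₂) := {{↑x₁}, {↑x₁, ↑x₂}} (where ↑ is an iterated singleton embedding ur_n → ur_m, m = max(n₁,n₂)), and the NRC[get] projection expressions π̂₁, π̂₂ defined via case analysis on whether the encoded pair is a singleton or two-element set, one has π̂₁(Pair(a₁,a₂)) = a₁ and π̂₂(Pair(a₁,a₂)) = a₂ for all objects a₁ of type ur_{n₁} and a₂ of type ur_{n₂}. -/

import Mathlib

/-- Monadic nested types over a set `U` of Ur-elements: `Mon U 0 = U`,
`Mon U (n+1) = Set (Mon U n)`. -/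
def Mon (U : Type) : ℕ → Type
  | 0 => U
  | n + 1 => Set (Mon U n)

instance MonInhabited (U : Type) [Inhabited U] : ∀ n, Inhabited (Mon U n)
  | 0 => ⟨(default : U)⟩
  | _ + 1 => ⟨(∅ : Set _)⟩

/-- The `k`-fold singleton embedding `Mon U n → Mon U (n+k)`. -/
def upIter {U : Type} {n : ℕ} : ∀ k : ℕ, Mon U n → Mon U (n + k)
  | 0, x => x
  | k + 1, x => ({upIter k x} : Set (Mon U (n + k)))

/-- The iterated singleton embedding `↑ : Mon U n → Mon U m` for `n ≤ m`. -/
def upTo {U : Type} {n m : ℕ} (h : n ≤ m) (x : Mon U n) : Mon U m :=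
  cast (congrArg (Mon U) (Nat.add_sub_cancel' h)) (upIter (m - n) x)

open Classical

/-- `get`: extract the unique element of a singleton, defaulting otherwise. -/

noncomputable def getM {U : Type} [Inhabited U] {k : ℕ} (s : Mon U (k + 1)) : Mon U k :=
  if h : ∃ x : Mon U k, s = ({x} : Set (Mon U k)) then h.choose else default

/-- `k`-fold downcasting `Mon U (n+k) → Mon U n` via iterated `get`. -/
noncomputable def downIter {U : Type} [Inhabited U] {n : ℕ} : ∀ k : ℕ, Mon U (n + k) → Mon U n
  | 0, x => x
  | k + 1, x => downIter k (getM x)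

/-- The iterated downcasting `↓ : Mon U m → Mon U n` for `n ≤ m`. -/
noncomputable def downTo {U : Type} [Inhabited U] {n m : ℕ} (h : n ≤ m) (x : Mon U m) :
    Mon U n :=
  downIter (m - n) (cast (congrArg (Mon U) (Nat.add_sub_cancel' h).symm) x)

/-- Kuratowski-style pairing on monadic types:
`Pair(a₁,a₂) = {{↑a₁}, {↑a₁, ↑a₂}} : Mon U (max n₁ n₂ + 2)`. -/
def KPair {U : Type} {n₁ n₂ : ℕ} (a₁ : Mon U n₁) (a₂ : Mon U n₂) :
    Mon U (max n₁ n₂ + 2) :=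
  ({({upTo (le_max_left n₁ n₂) a₁} : Set (Mon U (max n₁ n₂))),
    ({upTo (le_max_left n₁ n₂) a₁, upTo (le_max_right n₁ n₂) a₂} : Set (Mon U (max n₁ n₂)))} :
    Set (Set (Mon U (max n₁ n₂))))

/-- A set-typed monadic object, seen as a set. -/
def Mon.asSet {U : Type} {k : ℕ} (s : Mon U (k + 1)) : Set (Mon U k) := s

/-- The first projection `π̂₁` of an encoded pair, defined by case analysis on whether the
encoding contains two distinct elements: intersect the members of `p` and downcast,
otherwise just downcast `p` itself. -/
noncomputable def proj1 {U : Type} [Inhabited U] {n₁ m : ℕ} (h : n₁ ≤ m)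
    (p : Mon U (m + 2)) : Mon U n₁ :=
  if ∃ x ∈ Mon.asSet p, ∃ y ∈ Mon.asSet p, x ≠ y then
    downTo (Nat.le_succ_of_le h) (show Mon U (m + 1) from ⋂₀ Mon.asSet p)
  else
    downTo (by omega) p

/-- The second projection `π̂₂` of an encoded pair: when `p` has two distinct elements,
remove the singleton `{↑a₁}` from `p`, then remove `↑a₁` from the remaining two-element
set and downcast; otherwise just downcast `p`. -/
noncomputable def proj2 {U : Type} [Inhabited U] {n₁ n₂ m : ℕ} (h1 : n₁ ≤ m) (h2 : n₂ ≤ m)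
    (p : Mon U (m + 2)) : Mon U n₂ :=
  if ∃ x ∈ Mon.asSet p, ∃ y ∈ Mon.asSet p, x ≠ y then
    let a1up : Mon U m := upTo h1 (proj1 h1 p)
    let S2 : Mon U (m + 1) := getM ((Mon.asSet p \ {({a1up} : Set (Mon U m))} : Set (Set (Mon U m))))
    downTo h2 (getM ((Mon.asSet S2 \ {a1up} : Set (Mon U m))))
  else
    downTo (by omega) p

lemma getM_singleton {U : Type} [Inhabited U] {k : ℕ} (x : Mon U k) :
    getM ({x} : Set (Mon U k)) = x := by
  unfold getM
  have h : ∃ y : Mon U k, ({x} : Set (Mon U k)) = ({y} : Set (Mon U k)) := ⟨x, rfl⟩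
  refine (dif_pos h).trans ?_
  exact (Set.singleton_eq_singleton_iff.mp h.choose_spec).symm

lemma downIter_upIter {U : Type} [Inhabited U] {n : ℕ} :
    ∀ (k : ℕ) (x : Mon U n), downIter k (upIter k x) = x
  | 0, _ => rfl
  | k + 1, x => by
      show downIter k (getM (({upIter k x} : Set (Mon U (n + k))))) = x
      rw [getM_singleton]
      exact downIter_upIter k x

lemma downIter_cast {U : Type} [Inhabited U] {n : ℕ} {k k' : ℕ} (e : k = k')
    (x : Mon U (n + k)) (p : Mon U (n + k) = Mon U (n + k')) :
    downIter k' (cast p x) = downIter k x := by subst e; rfl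

lemma upIter_cast {U : Type} {n : ℕ} {k k' : ℕ} (e : k = k') (x : Mon U n)
    (p : Mon U (n + k) = Mon U (n + k')) :
    cast p (upIter k x) = upIter k' x := by subst e; rfl

lemma downTo_add {U : Type} [Inhabited U] {n k : ℕ} (h : n ≤ n + k) (x : Mon U (n + k)) :
    downTo h x = downIter k x := by
  unfold downTo
  exact downIter_cast (by omega) x _

lemma upTo_add {U : Type} {n k : ℕ} (h : n ≤ n + k) (x : Mon U n) :
    upTo h x = upIter k x := by
  unfold upTo
  exact upIter_cast (by omega) x _

lemma downTo_upTo {U : Type} [Inhabited U] {n m : ℕ} (h : n ≤ m) (x : Mon U n) :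
    downTo h (upTo h x) = x := by
  obtain ⟨k, rfl⟩ := Nat.le.dest h
  rw [upTo_add h, downTo_add h]
  exact downIter_upIter k x

lemma downTo_singleton {U : Type} [Inhabited U] {n m : ℕ} (h : n ≤ m) (h' : n ≤ m + 1)
    (x : Mon U m) : downTo h' (({x} : Set (Mon U m)) : Mon U (m + 1)) = downTo h x := by
  obtain ⟨k, rfl⟩ := Nat.le.dest h
  rw [downTo_add h]
  refine (downTo_add (k := k + 1) h' _).trans ?_
  show downIter k (getM (({x} : Set (Mon U (n + k))))) = downIter k x
  rw [getM_singleton]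


lemma proj1_pair {U : Type} [Inhabited U] {n₁ n₂ m : ℕ} (h1 : n₁ ≤ m) (h2 : n₂ ≤ m)
    (a₁ : Mon U n₁) (a₂ : Mon U n₂) :
    proj1 h1 ((({({upTo h1 a₁} : Set (Mon U m)),
      ({upTo h1 a₁, upTo h2 a₂} : Set (Mon U m))} : Set (Set (Mon U m))) : Mon U (m + 2))) = a₁ := by
  set u₁ := upTo h1 a₁ with hu₁
  set u₂ := upTo h2 a₂ with hu₂
  set p : Mon U (m + 2) :=
    (({({u₁} : Set (Mon U m)), ({u₁, u₂} : Set (Mon U m))} : Set (Set (Mon U m))) : Mon U (m + 2)) with hp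
  have hasSet : Mon.asSet p =
      ({({u₁} : Set (Mon U m)), ({u₁, u₂} : Set (Mon U m))} : Set (Set (Mon U m))) := rfl
  by_cases hEq : u₁ = u₂
  · have hps : p = ((({({u₁} : Set (Mon U m))}) : Set (Set (Mon U m))) : Mon U (m + 2)) := by
      rw [hp, ← hEq]
      simp [Set.pair_eq_singleton]
      rfl
    have hcond : ¬ ∃ x ∈ Mon.asSet p, ∃ y ∈ Mon.asSet p, x ≠ y := by
      rw [hps]
      rintro ⟨x, hx, y, hy, hxy⟩
      simp only [Mon.asSet, Set.mem_singleton_iff] at hx hy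
      exact hxy (hx.trans hy.symm)
    unfold proj1
    rw [if_neg hcond, hps]
    refine (downTo_singleton (Nat.le_succ_of_le h1) _ _).trans ?_
    refine (downTo_singleton h1 _ _).trans ?_
    rw [hu₁, downTo_upTo]
  · have hne : ({u₁} : Set (Mon U m)) ≠ ({u₁, u₂} : Set (Mon U m)) := by
      intro h
      apply hEq
      have : u₂ ∈ ({u₁} : Set (Mon U m)) := by rw [h]; simp
      simpa [eq_comm] using this
    have hcond : ∃ x ∈ Mon.asSet p, ∃ y ∈ Mon.asSet p, x ≠ y :=
      ⟨({u₁} : Set (Mon U m)), by rw [hasSet]; exact Or.inl rfl, ({u₁, u₂} : Set (Mon U m)),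
        by rw [hasSet]; exact Or.inr rfl, hne⟩
    unfold proj1
    rw [if_pos hcond]
    have hint : ⋂₀ Mon.asSet p = ({u₁} : Set (Mon U m)) := by
      rw [hasSet, Set.sInter_pair]
      exact Set.inter_eq_self_of_subset_left (by simp)
    have : downTo (Nat.le_succ_of_le h1) (show Mon U (m + 1) from ⋂₀ Mon.asSet p)
        = downTo (Nat.le_succ_of_le h1) (show Mon U (m + 1) from ({u₁} : Set (Mon U m))) := by
      rw [hint]
    rw [this, downTo_singleton h1, hu₁, downTo_upTo]

lemma proj2_pair {U : Type} [Inhabited U] {n₁ n₂ m : ℕ} (h1 : n₁ ≤ m) (h2 : n₂ ≤ m)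
    (a₁ : Mon U n₁) (a₂ : Mon U n₂) :
    proj2 h1 h2 ((({({upTo h1 a₁} : Set (Mon U m)),
      ({upTo h1 a₁, upTo h2 a₂} : Set (Mon U m))} : Set (Set (Mon U m))) : Mon U (m + 2))) = a₂ := by
  set u₁ := upTo h1 a₁ with hu₁
  set u₂ := upTo h2 a₂ with hu₂
  set p : Mon U (m + 2) :=
    (({({u₁} : Set (Mon U m)), ({u₁, u₂} : Set (Mon U m))} : Set (Set (Mon U m))) : Mon U (m + 2)) with hp
  have hasSet : Mon.asSet p =
      ({({u₁} : Set (Mon U m)), ({u₁, u₂} : Set (Mon U m))} : Set (Set (Mon U m))) := rfl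
  by_cases hEq : u₁ = u₂
  · have hps : p = ((({({u₁} : Set (Mon U m))}) : Set (Set (Mon U m))) : Mon U (m + 2)) := by
      rw [hp, ← hEq]
      simp [Set.pair_eq_singleton]
      rfl
    have hcond : ¬ ∃ x ∈ Mon.asSet p, ∃ y ∈ Mon.asSet p, x ≠ y := by
      rw [hps]
      rintro ⟨x, hx, y, hy, hxy⟩
      simp only [Mon.asSet, Set.mem_singleton_iff] at hx hy
      exact hxy (hx.trans hy.symm)
    unfold proj2
    rw [if_neg hcond, hps]
    refine (downTo_singleton (Nat.le_succ_of_le h2) _ _).trans ?_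
    refine (downTo_singleton h2 _ _).trans ?_
    rw [hEq, hu₂, downTo_upTo]
  · have hne : ({u₁} : Set (Mon U m)) ≠ ({u₁, u₂} : Set (Mon U m)) := by
      intro h
      apply hEq
      have : u₂ ∈ ({u₁} : Set (Mon U m)) := by rw [h]; simp
      simpa [eq_comm] using this
    have hcond : ∃ x ∈ Mon.asSet p, ∃ y ∈ Mon.asSet p, x ≠ y :=
      ⟨({u₁} : Set (Mon U m)), by rw [hasSet]; exact Or.inl rfl, ({u₁, u₂} : Set (Mon U m)),
        by rw [hasSet]; exact Or.inr rfl, hne⟩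
    have hproj1 : proj1 h1 p = a₁ := proj1_pair h1 h2 a₁ a₂
    unfold proj2
    rw [if_pos hcond]
    simp only [hproj1]
    have h3 : (Mon.asSet p \ {({u₁} : Set (Mon U m))} : Set (Set (Mon U m)))
        = {({u₁, u₂} : Set (Mon U m))} := by
      rw [hasSet]
      exact Set.pair_diff_left hne
    have h3' : getM (show Mon U (m+1+1) from
          (Mon.asSet p \ {({u₁} : Set (Mon U m))} : Set (Set (Mon U m))))
        = (show Mon U (m+1) from ({u₁, u₂} : Set (Mon U m))) := by
      have e : (show Mon U (m+1+1) from
            (Mon.asSet p \ {({u₁} : Set (Mon U m))} : Set (Set (Mon U m))))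
          = (show Mon U (m+1+1) from
            ({({u₁, u₂} : Set (Mon U m))} : Set (Set (Mon U m)))) := h3
      rw [e]
      exact getM_singleton _
    rw [h3']
    have h4 : (Mon.asSet (show Mon U (m+1) from ({u₁, u₂} : Set (Mon U m))) \ {u₁} : Set (Mon U m))
        = {u₂} := Set.pair_diff_left hEq
    have h4' : getM (show Mon U (m+1) from
          (Mon.asSet (show Mon U (m+1) from ({u₁, u₂} : Set (Mon U m))) \ {u₁} : Set (Mon U m)))
        = u₂ := by
      have e : (show Mon U (m+1) from
            (Mon.asSet (show Mon U (m+1) from ({u₁, u₂} : Set (Mon U m))) \ {u₁} : Set (Mon U m)))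
          = (show Mon U (m+1) from ({u₂} : Set (Mon U m))) := h4
      rw [e]
      exact getM_singleton _
    rw [h4', hu₂, downTo_upTo]


/-- **Correctness of the Kuratowski-style pairing on monadic nested types**
(Proposition B.2): for all objects `a₁ : ur_{n₁}` and `a₂ : ur_{n₂}`,
`π̂₁(Pair(a₁,a₂)) = a₁` and `π̂₂(Pair(a₁,a₂)) = a₂`. -/
theorem kuratowski_projections_correct {U : Type} [Inhabited U] {n₁ n₂ : ℕ}
    (a₁ : Mon U n₁) (a₂ : Mon U n₂) :
    proj1 (le_max_left n₁ n₂) (KPair a₁ a₂) = a₁ ∧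
    proj2 (le_max_left n₁ n₂) (le_max_right n₁ n₂) (KPair a₁ a₂) = a₂ := by
  exact ⟨proj1_pair _ (le_max_right n₁ n₂) a₁ a₂, proj2_pair _ _ a₁ a₂⟩
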